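/- Let A ⊆ ℝ² be Lebesgue measurable with ν₂(A) < ∞ and let λ_a > 0. Then, as λ_ℓ → ∞, exp( − λ_ℓ ∫_{0}^{2π} ∫_{0}^{∞} [ 1 − exp( − (λ_a/(π λ_ℓ)) · ν₁(L₍ρ,θ₎ ∩ A) ) ] dρ dθ ) converges to exp( − λ_a · ν₂(A) ). In other words, the void probability of the Cox process driven by a Poisson line process with density λ_ℓ in the representation space and per-line 1D Poisson intensity λ_p = λ_a/(π λ_ℓ) converges, as λ_ℓ → ∞ with the overall point density λ_a = π λ_ℓ λ_p held fixed, to the void probability exp(−λ_a ν₂(A)) of a homogeneous 2D Poisson point process with density λ_a. -/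

import Mathlib

open MeasureTheory Filter Real

noncomputable def lpt (θ ρ t : ℝ) : EuclideanSpace ℝ (Fin 2) :=
  WithLp.toLp 2 ![ρ * Real.cos θ - t * Real.sin θ, ρ * Real.sin θ + t * Real.cos θ]

lemma lpt_isometry (θ ρ : ℝ) : Isometry (lpt θ ρ) := by
  apply Isometry.of_dist_eq
  intro s t
  rw [EuclideanSpace.dist_eq, Fin.sum_univ_two]
  simp only [lpt, PiLp.toLp_apply, Matrix.cons_val_zero, Matrix.cons_val_one, Matrix.head_cons, Real.dist_eq]
  rw [sq_abs, sq_abs]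
  have : (ρ * Real.cos θ - s * Real.sin θ - (ρ * Real.cos θ - t * Real.sin θ)) ^ 2 +
      (ρ * Real.sin θ + s * Real.cos θ - (ρ * Real.sin θ + t * Real.cos θ)) ^ 2 = (s - t) ^ 2 := by
    have h := Real.sin_sq_add_cos_sq θ
    linear_combination (s - t) ^ 2 * h
  rw [this, Real.sqrt_sq_eq_abs]

lemma lpt_range (θ ρ : ℝ) :
    Set.range (lpt θ ρ) =
      {p : EuclideanSpace ℝ (Fin 2) | p 0 * Real.cos θ + p 1 * Real.sin θ = ρ} := by
  ext p
  constructor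
  · rintro ⟨t, rfl⟩
    have h := Real.sin_sq_add_cos_sq θ
    simp only [lpt, PiLp.toLp_apply, Set.mem_setOf_eq, Matrix.cons_val_zero, Matrix.cons_val_one, Matrix.head_cons]
    linear_combination ρ * h
  · intro hp
    refine ⟨p 1 * Real.cos θ - p 0 * Real.sin θ, ?_⟩
    have h := Real.sin_sq_add_cos_sq θ
    have h0 : p 0 * Real.cos θ + p 1 * Real.sin θ = ρ := hp
    ext i
    fin_cases i
    · show ρ * Real.cos θ - (p 1 * Real.cos θ - p 0 * Real.sin θ) * Real.sin θ = p 0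
      linear_combination (-Real.cos θ) * h0 + p 0 * h
    · show ρ * Real.sin θ + (p 1 * Real.cos θ - p 0 * Real.sin θ) * Real.cos θ = p 1
      linear_combination (-Real.sin θ) * h0 + p 1 * h

lemma hausdorff_line_eq (A : Set (EuclideanSpace ℝ (Fin 2))) (θ ρ : ℝ) :
    μH[1] ({p : EuclideanSpace ℝ (Fin 2) |
        p 0 * Real.cos θ + p 1 * Real.sin θ = ρ} ∩ A) = volume (lpt θ ρ ⁻¹' A) := by
  rw [← lpt_range θ ρ, Set.inter_comm, ← Set.image_preimage_eq_inter_range,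
    (lpt_isometry θ ρ).hausdorffMeasure_image (Or.inl zero_le_one),
    MeasureTheory.hausdorffMeasure_real]

noncomputable def rotF (θ : ℝ) (q : EuclideanSpace ℝ (Fin 2)) : EuclideanSpace ℝ (Fin 2) :=
  WithLp.toLp 2 ![q 0 * Real.cos θ - q 1 * Real.sin θ, q 0 * Real.sin θ + q 1 * Real.cos θ]

noncomputable def rotG (θ : ℝ) (q : EuclideanSpace ℝ (Fin 2)) : EuclideanSpace ℝ (Fin 2) :=
  WithLp.toLp 2 ![q 0 * Real.cos θ + q 1 * Real.sin θ, -(q 0 * Real.sin θ) + q 1 * Real.cos θ]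

lemma rotF_apply0 (θ : ℝ) (q : EuclideanSpace ℝ (Fin 2)) :
    rotF θ q 0 = q 0 * Real.cos θ - q 1 * Real.sin θ := rfl

lemma rotF_apply1 (θ : ℝ) (q : EuclideanSpace ℝ (Fin 2)) :
    rotF θ q 1 = q 0 * Real.sin θ + q 1 * Real.cos θ := rfl

lemma rotG_apply0 (θ : ℝ) (q : EuclideanSpace ℝ (Fin 2)) :
    rotG θ q 0 = q 0 * Real.cos θ + q 1 * Real.sin θ := rfl

lemma rotG_apply1 (θ : ℝ) (q : EuclideanSpace ℝ (Fin 2)) :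
    rotG θ q 1 = -(q 0 * Real.sin θ) + q 1 * Real.cos θ := rfl

lemma euclidean_ext {p q : EuclideanSpace ℝ (Fin 2)} (h0 : p 0 = q 0) (h1 : p 1 = q 1) :
    p = q := by
  ext i
  fin_cases i
  · exact h0
  · exact h1

noncomputable def rotL (θ : ℝ) : EuclideanSpace ℝ (Fin 2) ≃ₗ[ℝ] EuclideanSpace ℝ (Fin 2) where
  toFun := rotF θ
  invFun := rotG θ
  map_add' x y := by
    refine euclidean_ext ?_ ?_ <;>
      simp only [rotF_apply0, rotF_apply1, PiLp.add_apply] <;> ring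
  map_smul' c x := by
    refine euclidean_ext ?_ ?_ <;>
      simp only [rotF_apply0, rotF_apply1, PiLp.smul_apply, smul_eq_mul, RingHom.id_apply] <;> ring
  left_inv x := by
    have h := Real.sin_sq_add_cos_sq θ
    refine euclidean_ext ?_ ?_ <;>
      simp only [rotF_apply0, rotF_apply1, rotG_apply0, rotG_apply1]
    · linear_combination x 0 * h
    · linear_combination x 1 * h
  right_inv x := by
    have h := Real.sin_sq_add_cos_sq θ
    refine euclidean_ext ?_ ?_ <;>
      simp only [rotF_apply0, rotF_apply1, rotG_apply0, rotG_apply1]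
    · linear_combination x 0 * h
    · linear_combination x 1 * h

noncomputable def rotLIE (θ : ℝ) :
    EuclideanSpace ℝ (Fin 2) ≃ₗᵢ[ℝ] EuclideanSpace ℝ (Fin 2) :=
  ⟨rotL θ, by
    intro x
    have h := Real.sin_sq_add_cos_sq θ
    show ‖rotF θ x‖ = ‖x‖
    rw [EuclideanSpace.norm_eq, EuclideanSpace.norm_eq]
    simp only [Fin.sum_univ_two, rotF_apply0, rotF_apply1, Real.norm_eq_abs, sq_abs]
    congr 1
    linear_combination (x 0 ^ 2 + x 1 ^ 2) * h⟩

lemma rotLIE_apply (θ : ℝ) (q : EuclideanSpace ℝ (Fin 2)) : rotLIE θ q = rotF θ q := rfl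

lemma lpt_eq_rot (θ ρ t : ℝ) : lpt θ ρ t = rotLIE θ (WithLp.toLp 2 ![ρ, t] : EuclideanSpace ℝ (Fin 2)) := by
  rw [rotLIE_apply]
  rfl

lemma lpt_measurePreserving (θ : ℝ) :
    MeasurePreserving (fun p : ℝ × ℝ => lpt θ p.1 p.2) volume volume := by
  have h1 : MeasurePreserving (fun p : ℝ × ℝ => ((![p.1, p.2] : Fin 2 → ℝ) : Fin 2 → ℝ))
      volume volume := (volume_preserving_finTwoArrow ℝ).symm
  have h2 := (EuclideanSpace.volume_preserving_symm_measurableEquiv_toLp (Fin 2)).symm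
  have h3 := (rotLIE θ).measurePreserving
  exact h3.comp (h2.comp h1)

lemma indicator_comp (A : Set (EuclideanSpace ℝ (Fin 2))) (g : ℝ → EuclideanSpace ℝ (Fin 2))
    (t : ℝ) : A.indicator (1 : EuclideanSpace ℝ (Fin 2) → ENNReal) (g t) = (g ⁻¹' A).indicator 1 t := by
  by_cases h : g t ∈ A <;> simp [Set.indicator_apply, h]

lemma crofton (A : Set (EuclideanSpace ℝ (Fin 2))) (hA : MeasurableSet A) (θ : ℝ) :
    ∫⁻ ρ, volume (lpt θ ρ ⁻¹' A) = volume A := by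
  have hmeas : Measurable (A.indicator (1 : EuclideanSpace ℝ (Fin 2) → ENNReal)) := measurable_one.indicator hA
  have hmp := lpt_measurePreserving θ
  have key : ∫⁻ p : ℝ × ℝ, A.indicator 1 (lpt θ p.1 p.2) = volume A := by
    rw [hmp.lintegral_comp hmeas, lintegral_indicator_one hA]
  rw [← key, Measure.volume_eq_prod, lintegral_prod]
  · congr 1
    funext ρ
    have : ∀ t : ℝ, A.indicator (1 : EuclideanSpace ℝ (Fin 2) → ENNReal) (lpt θ ρ t)
        = (lpt θ ρ ⁻¹' A).indicator 1 t := fun t => indicator_comp A (lpt θ ρ) t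
    simp only [this]
    rw [lintegral_indicator_one ((lpt_isometry θ ρ).continuous.measurable hA)]
  · exact (hmeas.comp ((lpt_measurePreserving θ).measurable)).aemeasurable

lemma lpt_continuous : Continuous (fun w : (ℝ × ℝ) × ℝ => lpt w.1.1 w.1.2 w.2) := by
  have h : Continuous (fun w : (ℝ × ℝ) × ℝ =>
      (![w.1.2 * Real.cos w.1.1 - w.2 * Real.sin w.1.1,
         w.1.2 * Real.sin w.1.1 + w.2 * Real.cos w.1.1] : Fin 2 → ℝ)) := by
    apply continuous_pi
    intro i
    fin_cases i <;>
      simp only [Fin.zero_eta, Fin.mk_one, Matrix.cons_val_zero, Matrix.cons_val_one,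
        Matrix.head_cons] <;> fun_prop
  exact ((EuclideanSpace.equiv (Fin 2) ℝ).symm.continuous.comp h : _)

lemma m_lintegral (A : Set (EuclideanSpace ℝ (Fin 2))) (hA : MeasurableSet A) (θ ρ : ℝ) :
    volume (lpt θ ρ ⁻¹' A)
      = ∫⁻ t, A.indicator (1 : EuclideanSpace ℝ (Fin 2) → ENNReal) (lpt θ ρ t) := by
  have : ∀ t : ℝ, A.indicator (1 : EuclideanSpace ℝ (Fin 2) → ENNReal) (lpt θ ρ t)
      = (lpt θ ρ ⁻¹' A).indicator 1 t := fun t => indicator_comp A (lpt θ ρ) t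
  simp only [this]
  rw [lintegral_indicator_one ((lpt_isometry θ ρ).continuous.measurable hA)]

lemma m_meas (A : Set (EuclideanSpace ℝ (Fin 2))) (hA : MeasurableSet A) :
    Measurable (fun z : ℝ × ℝ => volume (lpt z.1 z.2 ⁻¹' A)) := by
  simp only [fun z : ℝ × ℝ => m_lintegral A hA z.1 z.2]
  exact Measurable.lintegral_prod_right'
    (f := fun q : (ℝ × ℝ) × ℝ => A.indicator 1 (lpt q.1.1 q.1.2 q.2))
    ((measurable_one.indicator hA).comp lpt_continuous.measurable)

lemma lpt_pi_add (θ ρ t : ℝ) : lpt (θ + π) ρ t = lpt θ (-ρ) (-t) := by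
  refine euclidean_ext ?_ ?_ <;>
    show _ = _ <;>
    simp only [lpt, PiLp.toLp_apply, Matrix.cons_val_zero, Matrix.cons_val_one, Matrix.head_cons,
      Real.cos_add_pi, Real.sin_add_pi] <;> ring

lemma m_pi_add (A : Set (EuclideanSpace ℝ (Fin 2))) (hA : MeasurableSet A) (θ ρ : ℝ) :
    volume (lpt (θ + π) ρ ⁻¹' A) = volume (lpt θ (-ρ) ⁻¹' A) := by
  have hset : lpt (θ + π) ρ ⁻¹' A = (fun t : ℝ => -t) ⁻¹' (lpt θ (-ρ) ⁻¹' A) := by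
    ext t
    simp [Set.mem_preimage, lpt_pi_add]
  rw [hset]
  exact (Measure.measurePreserving_neg (volume : Measure ℝ)).measure_preimage
    (((lpt_isometry θ (-ρ)).continuous.measurable hA).nullMeasurableSet)

lemma crofton_half (A : Set (EuclideanSpace ℝ (Fin 2))) (hA : MeasurableSet A) (θ : ℝ) :
    (∫⁻ ρ in Set.Ioi (0 : ℝ), volume (lpt θ ρ ⁻¹' A))
      + (∫⁻ ρ in Set.Ioi (0 : ℝ), volume (lpt (θ + π) ρ ⁻¹' A)) = volume A := by
  have hneg : (∫⁻ ρ in Set.Ioi (0 : ℝ), volume (lpt (θ + π) ρ ⁻¹' A))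
      = ∫⁻ ρ in Set.Iio (0 : ℝ), volume (lpt θ ρ ⁻¹' A) := by
    have h1 : ∀ ρ : ℝ, volume (lpt (θ + π) ρ ⁻¹' A) = volume (lpt θ (-ρ) ⁻¹' A) :=
      m_pi_add A hA θ
    simp only [h1]
    have hemb : MeasurableEmbedding (fun x : ℝ => -x) :=
      (Homeomorph.neg ℝ).measurableEmbedding
    have hpre : (fun x : ℝ => -x) ⁻¹' (Set.Iio (0 : ℝ)) = Set.Ioi (0 : ℝ) := by
      ext x; simp
    have := (Measure.measurePreserving_neg (volume : Measure ℝ)).setLIntegral_comp_preimage_emb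
      hemb (fun ρ => volume (lpt θ ρ ⁻¹' A)) (Set.Iio (0 : ℝ))
    rw [hpre] at this
    exact this
  rw [hneg, ← lintegral_union measurableSet_Iio
    (by simp [Set.disjoint_left]; intro x hx; linarith [hx] : Disjoint (Set.Ioi (0:ℝ)) (Set.Iio 0))]
  have hu : Set.Ioi (0 : ℝ) ∪ Set.Iio 0 = ({(0 : ℝ)}ᶜ : Set ℝ) := by
    ext x
    simp only [Set.mem_union, Set.mem_Ioi, Set.mem_Iio, Set.mem_compl_iff,
      Set.mem_singleton_iff]
    constructor
    · rintro (h | h) <;> intro he <;> simp [he] at h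
    · intro h
      rcases (lt_or_gt_of_ne h) with h' | h'
      · exact Or.inr h'
      · exact Or.inl h'
  rw [hu]
  have hae : ({(0 : ℝ)}ᶜ : Set ℝ) =ᵐ[volume] (Set.univ : Set ℝ) := by
    rw [Filter.eventuallyEq_set]
    have : ∀ᵐ x : ℝ ∂volume, x ≠ 0 := by
      simpa using ae_iff.2 (by simpa using (Real.volume_singleton (a := (0:ℝ))))
    filter_upwards [this] with x hx
    simp [hx]
  rw [setLIntegral_congr hae, setLIntegral_univ, crofton A hA θ]

lemma G_meas (A : Set (EuclideanSpace ℝ (Fin 2))) (hA : MeasurableSet A) :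
    Measurable (fun θ : ℝ => ∫⁻ ρ in Set.Ioi (0 : ℝ), volume (lpt θ ρ ⁻¹' A)) := by
  exact Measurable.lintegral_prod_right'
    (f := fun z : ℝ × ℝ => volume (lpt z.1 z.2 ⁻¹' A)) (m_meas A hA)

lemma K_eq (A : Set (EuclideanSpace ℝ (Fin 2))) (hA : MeasurableSet A) :
    ∫⁻ θ in Set.Ioo (0 : ℝ) (2 * π), ∫⁻ ρ in Set.Ioi (0 : ℝ), volume (lpt θ ρ ⁻¹' A)
      = ENNReal.ofReal π * volume A := by
  set G : ℝ → ENNReal := fun θ => ∫⁻ ρ in Set.Ioi (0 : ℝ), volume (lpt θ ρ ⁻¹' A) with hG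
  have hGmeas : Measurable G := G_meas A hA
  have hsplit : Set.Ioo (0 : ℝ) (2 * π) = Set.Ioo 0 π ∪ Set.Ico π (2 * π) :=
    (Set.Ioo_union_Ico_eq_Ioo Real.pi_pos (by linarith [Real.pi_pos])).symm
  have hdisj : Disjoint (Set.Ioo (0 : ℝ) π) (Set.Ico π (2 * π)) := by
    rw [Set.disjoint_left]
    rintro x ⟨_, h1⟩ ⟨h2, _⟩
    linarith
  rw [hsplit, lintegral_union measurableSet_Ico hdisj]
  have htrans : ∫⁻ θ in Set.Ico π (2 * π), G θ = ∫⁻ θ in Set.Ico (0 : ℝ) π, G (θ + π) := by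
    have hmp := measurePreserving_add_right (volume : Measure ℝ) π
    have hemb : MeasurableEmbedding (fun x : ℝ => x + π) :=
      (Homeomorph.addRight (π : ℝ)).measurableEmbedding
    have hpre : (fun x : ℝ => x + π) ⁻¹' Set.Ico π (2 * π) = Set.Ico (0 : ℝ) π := by
      ext x
      simp only [Set.mem_preimage, Set.mem_Ico]
      constructor <;> rintro ⟨h1, h2⟩ <;> constructor <;> linarith
    have := hmp.setLIntegral_comp_preimage_emb hemb G (Set.Ico π (2 * π))
    rw [hpre] at this
    exact this.symm
  rw [htrans]
  have hae : Set.Ico (0 : ℝ) π =ᵐ[volume] Set.Ioo (0 : ℝ) π := (Ioo_ae_eq_Ico (μ := volume)).symm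
  rw [setLIntegral_congr hae]
  have hadd : (∫⁻ θ in Set.Ioo (0 : ℝ) π, G θ) + (∫⁻ θ in Set.Ioo (0 : ℝ) π, G (θ + π))
      = ∫⁻ θ in Set.Ioo (0 : ℝ) π, (G θ + G (θ + π)) := by
    rw [lintegral_add_left (hGmeas.mono le_rfl le_rfl)]
  rw [hadd]
  have hval : ∀ θ : ℝ, G θ + G (θ + π) = volume A := fun θ => crofton_half A hA θ
  calc ∫⁻ θ in Set.Ioo (0 : ℝ) π, (G θ + G (θ + π))
      = ∫⁻ _ in Set.Ioo (0 : ℝ) π, volume A := by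
        apply lintegral_congr
        intro θ
        exact hval θ
    _ = volume A * volume (Set.Ioo (0 : ℝ) π) := setLIntegral_const _ _
    _ = ENNReal.ofReal π * volume A := by
        rw [Real.volume_Ioo, sub_zero, mul_comm]

lemma one_sub_exp_neg_le (x : ℝ) : 1 - Real.exp (-x) ≤ x := by
  linarith [Real.add_one_le_exp (-x)]

lemma exp_neg_le_one (x : ℝ) (hx : 0 ≤ x) : Real.exp (-x) ≤ 1 := by
  rw [Real.exp_le_one_iff]
  linarith

lemma key_lim (k : ℝ) (hk : 0 ≤ k) :
    Tendsto (fun l : ℝ => l * (1 - Real.exp (-(k / l)))) atTop (nhds k) := by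
  rcases eq_or_lt_of_le hk with hk0 | hkpos
  · simp only [← hk0, zero_div, neg_zero, Real.exp_zero, sub_self, mul_zero]
    exact tendsto_const_nhds
  · have hf : HasDerivAt (fun x : ℝ => 1 - Real.exp (-x)) 1 0 := by
      have h1 : HasDerivAt (fun x : ℝ => -x) (-1) 0 := (hasDerivAt_id (0 : ℝ)).neg
      have h2 : HasDerivAt (fun x : ℝ => Real.exp (-x)) (Real.exp (-(0 : ℝ)) * (-1)) 0 :=
        (Real.hasDerivAt_exp (-(0 : ℝ))).comp 0 h1
      have h3 := (hasDerivAt_const (0 : ℝ) (1 : ℝ)).sub h2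
      have h4 : HasDerivAt (fun x : ℝ => 1 - Real.exp (-x)) (0 - Real.exp (-(0 : ℝ)) * (-1)) 0 := h3
      convert h4 using 1
      norm_num
    have hslope := hasDerivAt_iff_tendsto_slope.mp hf
    have hdiv : Tendsto (fun l : ℝ => k / l) atTop (nhdsWithin 0 {(0 : ℝ)}ᶜ) := by
      apply tendsto_nhdsWithin_of_tendsto_nhds_of_eventually_within
      · exact tendsto_const_nhds.div_atTop tendsto_id
      · filter_upwards [eventually_gt_atTop (0 : ℝ)] with l hl
        simp only [Set.mem_compl_iff, Set.mem_singleton_iff]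
        exact (div_pos hkpos hl).ne'
    have hcomp : Tendsto (fun l : ℝ => slope (fun x : ℝ => 1 - Real.exp (-x)) 0 (k / l))
        atTop (nhds 1) := hslope.comp hdiv
    have hmul := hcomp.const_mul k
    rw [mul_one] at hmul
    apply Tendsto.congr' _ hmul
    filter_upwards [eventually_gt_atTop (0 : ℝ)] with l hl
    have hkl : k / l ≠ 0 := (div_pos hkpos hl).ne'
    rw [slope_def_field]
    have hk0 : k ≠ 0 := hkpos.ne'
    simp only [neg_zero, Real.exp_zero]
    field_simp
    have hkk : k * k⁻¹ = 1 := mul_inv_cancel₀ hk0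
    linear_combination (1 - rexp (-(k / l))) * hkk


/-- Asymptotic convergence of the void probability of a Cox process driven by a Poisson line
process (line density `lamL` in the representation space, per-line 1D Poisson intensity
`lam_a / (π lamL)`, so that the overall point density `lam_a` stays fixed) to the void
probability `exp(−lam_a · ν₂(A))` of a homogeneous 2D PPP of density `lam_a`, as `lamL → ∞`. -/
theorem cox_void_probability_tendsto_ppp_void_probability
    (A : Set (EuclideanSpace ℝ (Fin 2))) (hA : MeasurableSet A)
    (hA_fin : volume A < ⊤) (lam_a : ℝ) (hlam_a : 0 < lam_a) :
    Tendsto (fun lamL : ℝ =>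
        Real.exp (-(lamL *
          ∫ θ in Set.Ioo (0 : ℝ) (2 * π), ∫ ρ in Set.Ioi (0 : ℝ),
            (1 - Real.exp (-(lam_a / (π * lamL)) *
              (μH[1] ({p : EuclideanSpace ℝ (Fin 2) |
                p 0 * Real.cos θ + p 1 * Real.sin θ = ρ} ∩ A)).toReal)))))
      atTop (nhds (Real.exp (-(lam_a * (volume A).toReal)))) := by
  have hπ : (0 : ℝ) < π := Real.pi_pos
  set M : ℝ × ℝ → ENNReal := fun z => volume (lpt z.1 z.2 ⁻¹' A) with hM
  set P : Measure (ℝ × ℝ) :=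
    (volume.restrict (Set.Ioo (0 : ℝ) (2 * π))).prod (volume.restrict (Set.Ioi (0 : ℝ))) with hP
  have hMmeas : Measurable M := m_meas A hA
  have hmt : Measurable fun z => (M z).toReal := hMmeas.ennreal_toReal
  have hK : ∫⁻ z, M z ∂P = ENNReal.ofReal π * volume A := by
    rw [hP, lintegral_prod _ hMmeas.aemeasurable]
    exact K_eq A hA
  have hKne : ∫⁻ z, M z ∂P ≠ ⊤ := by
    rw [hK]
    exact (ENNReal.mul_lt_top ENNReal.ofReal_lt_top hA_fin).ne
  have hMint : Integrable (fun z => (M z).toReal) P :=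
    integrable_toReal_of_lintegral_ne_top hMmeas.aemeasurable hKne
  have hMfin : ∀ᵐ z ∂P, M z < ⊤ := ae_lt_top hMmeas hKne
  have hIntM : ∫ z, (M z).toReal ∂P = π * (volume A).toReal := by
    rw [integral_toReal hMmeas.aemeasurable hMfin, hK, ENNReal.toReal_mul,
      ENNReal.toReal_ofReal hπ.le]
  set bound : ℝ × ℝ → ℝ := fun z => (lam_a / π) * (M z).toReal with hbound
  have hbound_int : Integrable bound P := hMint.const_mul _
  have hbound_val : ∫ z, bound z ∂P = lam_a * (volume A).toReal := by
    rw [hbound]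
    rw [integral_const_mul, hIntM]
    field_simp
  set g : ℝ → ℝ × ℝ → ℝ :=
    fun l z => 1 - Real.exp (-(lam_a / (π * l)) * (M z).toReal) with hg
  have hgmeas : ∀ l, Measurable (g l) := by
    intro l
    apply Measurable.const_sub
    exact (Real.measurable_exp.comp (hmt.const_mul _))
  -- basic bounds for l ≥ 1
  have hg_bounds : ∀ l : ℝ, 1 ≤ l → ∀ z,
      0 ≤ g l z ∧ g l z ≤ (lam_a / (π * l)) * (M z).toReal := by
    intro l hl z
    have hl0 : (0 : ℝ) < l := lt_of_lt_of_le one_pos hl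
    have hm0 : (0 : ℝ) ≤ (M z).toReal := ENNReal.toReal_nonneg
    have hc0 : (0 : ℝ) ≤ lam_a / (π * l) := by positivity
    have hcm : (0 : ℝ) ≤ lam_a / (π * l) * (M z).toReal := by positivity
    have hrw : -(lam_a / (π * l)) * (M z).toReal = -(lam_a / (π * l) * (M z).toReal) := by ring
    constructor
    · rw [hg, sub_nonneg, hrw]
      exact exp_neg_le_one _ hcm
    · have h2 := one_sub_exp_neg_le (lam_a / (π * l) * (M z).toReal)
      have h3 : g l z = 1 - Real.exp (-(lam_a / (π * l) * (M z).toReal)) := by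
        simp only [hg]
        rw [hrw]
      rw [h3]
      linarith
  have hF_int : ∀ l : ℝ, 1 ≤ l → Integrable (g l) P := by
    intro l hl
    have hl0 : (0 : ℝ) < l := lt_of_lt_of_le one_pos hl
    apply hbound_int.mono ((hgmeas l).aestronglyMeasurable)
    apply ae_of_all
    intro z
    obtain ⟨h0, h1⟩ := hg_bounds l hl z
    have hm0 : (0 : ℝ) ≤ (M z).toReal := ENNReal.toReal_nonneg
    have hc : lam_a / (π * l) ≤ lam_a / π := by
      apply div_le_div_of_nonneg_left hlam_a.le hπ
      nlinarith
    rw [Real.norm_eq_abs, Real.norm_eq_abs, abs_of_nonneg h0, abs_of_nonneg (by positivity)]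
    calc g l z ≤ lam_a / (π * l) * (M z).toReal := h1
      _ ≤ lam_a / π * (M z).toReal := by nlinarith
  -- main dominated convergence
  have htend : Tendsto (fun l : ℝ => ∫ z, l * g l z ∂P) atTop
      (nhds (lam_a * (volume A).toReal)) := by
    rw [← hbound_val]
    apply tendsto_integral_filter_of_dominated_convergence bound
    · filter_upwards with l
      exact (measurable_const.mul (hgmeas l)).aestronglyMeasurable
    · filter_upwards [eventually_ge_atTop (1 : ℝ)] with l hl
      apply ae_of_all
      intro z
      have hl0 : (0 : ℝ) < l := lt_of_lt_of_le one_pos hl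
      obtain ⟨h0, h1⟩ := hg_bounds l hl z
      have hm0 : (0 : ℝ) ≤ (M z).toReal := ENNReal.toReal_nonneg
      rw [Real.norm_eq_abs, abs_of_nonneg (by positivity)]
      have hmul : l * (lam_a / (π * l) * (M z).toReal) = lam_a / π * (M z).toReal := by
        field_simp
      have hb : bound z = lam_a / π * (M z).toReal := rfl
      rw [hb, ← hmul]
      exact mul_le_mul_of_nonneg_left h1 hl0.le
    · exact hbound_int
    · apply ae_of_all
      intro z
      have hk0 : (0 : ℝ) ≤ lam_a / π * (M z).toReal := by positivity
      have := key_lim (lam_a / π * (M z).toReal) hk0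
      apply Tendsto.congr' _ this
      filter_upwards [eventually_gt_atTop (0 : ℝ)] with l hl
      have h1 : -(lam_a / π * (M z).toReal / l) = -(lam_a / (π * l)) * (M z).toReal := by
        field_simp
      rw [h1]
  -- identify the statement's integrand with ∫ z, g l z ∂P for l ≥ 1
  have heq : (fun l : ℝ =>
      Real.exp (-(l *
        ∫ θ in Set.Ioo (0 : ℝ) (2 * π), ∫ ρ in Set.Ioi (0 : ℝ),
          (1 - Real.exp (-(lam_a / (π * l)) *
            (μH[1] ({p : EuclideanSpace ℝ (Fin 2) |
              p 0 * Real.cos θ + p 1 * Real.sin θ = ρ} ∩ A)).toReal)))))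
      =ᶠ[atTop] (fun l : ℝ => Real.exp (-(∫ z, l * g l z ∂P))) := by
    filter_upwards [eventually_ge_atTop (1 : ℝ)] with l hl
    have hrw : ∀ θ ρ : ℝ, (μH[1] ({p : EuclideanSpace ℝ (Fin 2) |
        p 0 * Real.cos θ + p 1 * Real.sin θ = ρ} ∩ A)) = volume (lpt θ ρ ⁻¹' A) :=
      hausdorff_line_eq A
    have hI : (∫ θ in Set.Ioo (0 : ℝ) (2 * π), ∫ ρ in Set.Ioi (0 : ℝ),
          (1 - Real.exp (-(lam_a / (π * l)) *
            (μH[1] ({p : EuclideanSpace ℝ (Fin 2) |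
              p 0 * Real.cos θ + p 1 * Real.sin θ = ρ} ∩ A)).toReal)))
        = ∫ z, g l z ∂P := by
      simp only [hrw]
      rw [hP]
      exact MeasureTheory.integral_integral (f := fun θ ρ => g l (θ, ρ)) (hF_int l hl)
    rw [hI, integral_const_mul]
  -- conclude
  have hfinal : Tendsto (fun l : ℝ => Real.exp (-(∫ z, l * g l z ∂P))) atTop
      (nhds (Real.exp (-(lam_a * (volume A).toReal)))) := by
    have := htend.neg
    exact (Real.continuous_exp.continuousAt.tendsto).comp this
  exact hfinal.congr' heq.symm
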